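/- Let $\mathcal{O}$ be a valuation ring with fraction field $\mathfrak{C}$, let $L \subseteq \mathfrak{C}^n$ be a $\mathfrak{C}$-linear subspace of dimension $d$, and let $I = \{a \in \mathcal{O}^n : \sum_{i=1}^n a_i x_i = 0 \text{ for all } x \in L\}$. Then $I$ is a free $\mathcal{O}$-module of rank $n - d$. -/

import Mathlib

open Module Submodule Set

section Aux

variable {O C : Type*} [CommRing O] [IsDomain O] [ValuationRing O]
    [Field C] [Algebra O C] [IsFractionRing O C]

/-- Among the entries of a nonzero vector over the fraction field of a valuation ring,
there is one dividing all the others. -/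
lemma pivot_exists {n : ℕ} (w : Fin n → C) (hw : w ≠ 0) :
    ∃ i, w i ≠ 0 ∧ ∀ j, (w i)⁻¹ * w j ∈ (algebraMap O C).range := by
  classical
  set v := ValuationRing.valuation O C with hv
  have hn : (Finset.univ.filter fun i => w i ≠ 0).Nonempty := by
    obtain ⟨i, hi⟩ := Function.ne_iff.mp hw
    exact ⟨i, by simpa using hi⟩
  obtain ⟨i, hi, hmax⟩ := Finset.exists_max_image _ (fun i => v (w i)) hn
  have hwi : w i ≠ 0 := (Finset.mem_filter.mp hi).2
  refine ⟨i, hwi, fun j => ?_⟩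
  by_cases hj : w j = 0
  · exact ⟨0, by simp [hj]⟩
  · have hle : v (w j) ≤ v (w i) := hmax j (Finset.mem_filter.mpr ⟨Finset.mem_univ _, hj⟩)
    have hint : v ((w i)⁻¹ * w j) ≤ 1 := by
      have h1 : v ((w i)⁻¹ * w j) = (v (w i))⁻¹ * v (w j) := by
        rw [map_mul, map_inv₀]
      rw [h1]
      calc (v (w i))⁻¹ * v (w j) ≤ (v (w i))⁻¹ * v (w i) := mul_le_mul_right hle _
        _ = 1 := inv_mul_cancel₀ (by simpa using hwi)
    obtain ⟨a, ha⟩ := (ValuationRing.mem_integer_iff O C _).mp hint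
    exact ⟨a, ha⟩

/-- Echelon-basis lemma: every `m`-dimensional subspace of `C^n` has a basis consisting of
integral vectors with a unit pivot pattern. -/
lemma echelon {n : ℕ} (m : ℕ) (W : Submodule C (Fin n → C)) (hW : Module.finrank C W = m) :
    ∃ (b : Fin m → (Fin n → C)) (σ : Fin m → Fin n),
      (∀ k i, b k i ∈ (algebraMap O C).range) ∧
      (∀ k l, b k (σ l) = if k = l then 1 else 0) ∧
      Submodule.span C (Set.range b) = W := by
  classical
  induction m generalizing W with
  | zero =>
    refine ⟨Fin.elim0, Fin.elim0, fun k => k.elim0, fun k => k.elim0, ?_⟩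
    rw [Set.range_eq_empty, Submodule.span_empty]
    exact (Submodule.finrank_eq_zero.mp hW).symm
  | succ m ih =>
    -- pick a nonzero vector in W
    have hWne : W ≠ ⊥ := by
      intro h
      rw [h] at hW
      simp [finrank_bot] at hW
    obtain ⟨w, hwW, hw0⟩ := Submodule.exists_mem_ne_zero_of_ne_bot hWne
    obtain ⟨i, hwi, hpiv⟩ := pivot_exists (O := O) w hw0
    set w' : Fin n → C := (w i)⁻¹ • w with hw'
    have hw'W : w' ∈ W := W.smul_mem _ hwW
    have hw'i : w' i = 1 := by simp [hw', inv_mul_cancel₀ hwi]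
    have hw'int : ∀ j, w' j ∈ (algebraMap O C).range := fun j => hpiv j
    -- the hyperplane section
    set g : W →ₗ[C] C := (LinearMap.proj i).comp W.subtype with hg
    have hgsurj : Function.Surjective g := by
      intro c
      refine ⟨c • ⟨w', hw'W⟩, ?_⟩
      simp [hg, hw'i]
    have hker : Module.finrank C (LinearMap.ker g) = m := by
      have h1 := LinearMap.finrank_range_add_finrank_ker g
      rw [LinearMap.range_eq_top.mpr hgsurj, finrank_top, hW] at h1
      simp [finrank_self] at h1
      omega
    set W' : Submodule C (Fin n → C) := (LinearMap.ker g).map W.subtype with hW'def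
    have hW'rank : Module.finrank C W' = m := by
      rw [hW'def, Submodule.finrank_map_subtype_eq]; exact hker
    have hW'mem : ∀ y, y ∈ W' ↔ (y ∈ W ∧ y i = 0) := by
      intro y
      constructor
      · rintro ⟨⟨z, hz⟩, hzk, rfl⟩
        exact ⟨hz, by simpa [hg] using hzk⟩
      · rintro ⟨hyW, hyi⟩
        exact ⟨⟨y, hyW⟩, by simpa [hg] using hyi, rfl⟩
    obtain ⟨b', σ', hint', hpiv', hspan'⟩ := ih W' hW'rank
    have hb'W' : ∀ k, b' k ∈ W' := by
      intro k
      rw [← hspan']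
      exact Submodule.subset_span ⟨k, rfl⟩
    have hb'W : ∀ k, b' k ∈ W := fun k => ((hW'mem _).mp (hb'W' k)).1
    have hb'i : ∀ k, b' k i = 0 := fun k => ((hW'mem _).mp (hb'W' k)).2
    -- the new leading vector
    set b0 : Fin n → C := w' - ∑ k, w' (σ' k) • b' k with hb0
    have hb0W : b0 ∈ W := by
      refine W.sub_mem hw'W (Submodule.sum_mem _ fun k _ => W.smul_mem _ (hb'W k))
    have hb0i : b0 i = 1 := by
      simp [hb0, hw'i, hb'i]
    have hb0piv : ∀ l, b0 (σ' l) = 0 := by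
      intro l
      simp only [hb0, Pi.sub_apply, Finset.sum_apply, Pi.smul_apply, smul_eq_mul]
      rw [Finset.sum_eq_single l]
      · rw [hpiv' l l]; simp
      · intro k _ hkl; rw [hpiv' k l]; simp [hkl]
      · simp
    have hb0int : ∀ j, b0 j ∈ (algebraMap O C).range := by
      intro j
      refine Subring.sub_mem _ (hw'int j) ?_
      have : (∑ k, w' (σ' k) • b' k) j = ∑ k, w' (σ' k) * b' k j := by
        simp
      rw [this]
      exact Subring.sum_mem _ fun k _ => Subring.mul_mem _ (hw'int _) (hint' k j)
    refine ⟨Fin.cons b0 b', Fin.cons i σ', ?_, ?_, ?_⟩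
    · intro k j
      refine Fin.cases ?_ ?_ k
      · exact hb0int j
      · intro k'; exact hint' k' j
    · intro k l
      refine Fin.cases ?_ ?_ k <;> [skip; intro k'] <;> refine Fin.cases ?_ ?_ l
      · simp [hb0i]
      · intro l'; simp [hb0piv l', (Fin.succ_ne_zero l').symm]
      · simp [hb'i k', Fin.succ_ne_zero k']
      · intro l'
        simp only [Fin.cons_succ]
        rw [hpiv' k' l']
        by_cases h : k' = l' <;> simp [h, Fin.succ_inj]
    · apply le_antisymm
      · rw [Submodule.span_le]
        rintro y ⟨k, rfl⟩
        refine Fin.cases ?_ ?_ k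
        · exact hb0W
        · intro k'; exact hb'W k'
      · intro y hy
        have h1 : y - y i • b0 ∈ W' := by
          rw [hW'mem]
          constructor
          · exact W.sub_mem hy (W.smul_mem _ hb0W)
          · simp [hb0i]
        have h2 : y - y i • b0 ∈ Submodule.span C (Set.range (Fin.cons b0 b' : Fin (m+1) → Fin n → C)) := by
          rw [← hspan'] at h1
          refine Submodule.span_mono ?_ h1
          rintro z ⟨k, rfl⟩
          exact ⟨k.succ, rfl⟩
        have h3 : y i • b0 ∈ Submodule.span C (Set.range (Fin.cons b0 b' : Fin (m+1) → Fin n → C)) :=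
          Submodule.smul_mem _ _ (Submodule.subset_span ⟨0, rfl⟩)
        simpa using Submodule.add_mem _ h2 h3

end Aux

/-- Let `𝒪` be a valuation ring with fraction field `𝔠` and
`L ⊆ 𝔠^n` a `𝔠`-subspace of dimension `d`. Then the `𝒪`-module of integral linear
forms vanishing on `L` is free of rank `n - d`. -/
theorem stmt12 {O C : Type*} [CommRing O] [IsDomain O] [ValuationRing O]
    [Field C] [Algebra O C] [IsFractionRing O C] (n d : ℕ)
    (L : Submodule C (Fin n → C)) (hd : Module.finrank C L = d) :
    ∃ J : Submodule O (Fin n → O),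
      (J : Set (Fin n → O))
          = {a : Fin n → O | ∀ x ∈ L, ∑ i, algebraMap O C (a i) * x i = 0}
        ∧ Nonempty (Basis (Fin (n - d)) O J) := by
  classical
  -- the annihilator subspace of `L` in `C^n`
  set W : Submodule C (Fin n → C) :=
    { carrier := {y | ∀ x ∈ L, ∑ i, y i * x i = 0}
      add_mem' := by
        intro y z hy hz x hx
        simp only [Set.mem_setOf_eq] at hy hz
        simp [Pi.add_apply, add_mul, Finset.sum_add_distrib, hy x hx, hz x hx]
      zero_mem' := by simp
      smul_mem' := by
        intro c y hy x hx
        simp only [Set.mem_setOf_eq] at hy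
        simp [Pi.smul_apply, smul_eq_mul, mul_assoc, ← Finset.mul_sum, hy x hx] } with hWdef
  have hWmem : ∀ y, y ∈ W ↔ ∀ x ∈ L, ∑ i, y i * x i = 0 := fun y => Iff.rfl
  -- duality: `W` is the coannihilator of the image of `L` in the dual
  have hWrank : Module.finrank C W = n - d := by
    set e : (Fin n → C) ≃ₗ[C] Module.Dual C (Fin n → C) := Module.piEquiv (Fin n) C C with he
    have hW : W = (L.map e.toLinearMap).dualCoannihilator := by
      ext y
      rw [hWmem, Submodule.mem_dualCoannihilator]
      constructor
      · rintro h f ⟨x, hx, rfl⟩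
        simp only [LinearEquiv.coe_coe, he, Module.piEquiv_apply_apply, smul_eq_mul]
        simpa [mul_comm] using h x hx
      · intro h x hx
        have := h (e x) ⟨x, hx, rfl⟩
        simp only [LinearEquiv.coe_coe, he, Module.piEquiv_apply_apply, smul_eq_mul] at this
        simpa [mul_comm] using this
    have h1 := Subspace.finrank_add_finrank_dualCoannihilator_eq (L.map e.toLinearMap)
    rw [LinearEquiv.finrank_map_eq e L, hd, Module.finrank_fin_fun] at h1
    rw [hW]
    omega
  obtain ⟨b, σ, hint, hpiv, hspan⟩ := echelon (O := O) (n - d) W hWrank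
  choose bO hbO using hint
  have hinj : Function.Injective (algebraMap O C) := IsFractionRing.injective O C
  have hbW : ∀ k, b k ∈ W := fun k => hspan ▸ Submodule.subset_span ⟨k, rfl⟩
  refine ⟨Submodule.span O (Set.range bO), ?_, ?_⟩
  · ext a
    simp only [SetLike.mem_coe, Set.mem_setOf_eq]
    constructor
    · intro ha
      refine Submodule.span_induction ?_ ?_ ?_ ?_ ha
      · rintro _ ⟨k, rfl⟩ x hx
        have := (hWmem (b k)).mp (hbW k) x hx
        simpa [hbO] using this
      · intro x hx; simp
      · intro y z _ _ hy hz x hx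
        simp [Pi.add_apply, map_add, add_mul, Finset.sum_add_distrib, hy x hx, hz x hx]
      · intro c y _ hy x hx
        simp [Pi.smul_apply, smul_eq_mul, map_mul, mul_assoc, ← Finset.mul_sum, hy x hx]
    · intro ha
      have haW : (fun i => algebraMap O C (a i)) ∈ W := (hWmem _).mpr ha
      rw [← hspan, mem_span_range_iff_exists_fun] at haW
      obtain ⟨c, hc⟩ := haW
      have hcl : ∀ l, c l = algebraMap O C (a (σ l)) := by
        intro l
        have h1 := congrFun hc (σ l)
        simp only [Finset.sum_apply, Pi.smul_apply, smul_eq_mul] at h1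
        rw [Finset.sum_eq_single l] at h1
        · rw [hpiv] at h1; simpa using h1
        · intro k _ hkl; rw [hpiv]; simp [hkl]
        · simp
      have key : a = ∑ k, a (σ k) • bO k := by
        funext j
        apply hinj
        have h1 := congrFun hc j
        simp only [Finset.sum_apply, Pi.smul_apply, smul_eq_mul] at h1 ⊢
        calc (algebraMap O C) (a j) = ∑ k, c k * b k j := h1.symm
          _ = (algebraMap O C) (∑ k, a (σ k) * bO k j) := by
              rw [map_sum]
              exact Finset.sum_congr rfl fun k _ => by rw [map_mul, hbO, hcl]
      rw [key]
      exact Submodule.sum_mem _ fun k _ =>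
        Submodule.smul_mem _ _ (Submodule.subset_span ⟨k, rfl⟩)
  · have hli : LinearIndependent O bO := by
      rw [Fintype.linearIndependent_iff]
      intro g hg l
      have h1 := congrFun hg (σ l)
      simp only [Finset.sum_apply, Pi.smul_apply, smul_eq_mul, Pi.zero_apply] at h1
      have h2 : ∑ k, algebraMap O C (g k) * b k (σ l) = 0 := by
        calc ∑ k, algebraMap O C (g k) * b k (σ l)
            = (algebraMap O C) (∑ k, g k * bO k (σ l)) := by
              rw [map_sum]
              exact Finset.sum_congr rfl fun k _ => by rw [map_mul, hbO]
          _ = 0 := by rw [h1, map_zero]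
      rw [Finset.sum_eq_single l] at h2
      · rw [hpiv] at h2
        refine hinj ?_
        rw [map_zero]
        simpa using h2
      · intro k _ hkl; rw [hpiv]; simp [hkl]
      · simp
    exact ⟨Basis.span hli⟩
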